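/- arXiv:1612.07242 — 3 statements merged into one kernel-verified Lean document; each statement's English description precedes it below -/
import Mathlib

section
/- Let m > n ≥ 2 be integers that are both even. Then the infimum of the set of values (n·sin t − sin(n t))/(m·sin t − sin(m t)) as t ranges over the open interval (0, π) equals (n³ − n)/(m³ − m). -/
open Real Filter


noncomputable def Sp (p : ℕ) (x : ℝ) : ℝ := ∑ i ∈ Finset.range p, Real.sin ((2*(i:ℝ)+1) * x) ^ 2
noncomputable def Qp (p : ℕ) : ℝ := ∑ i ∈ Finset.range p, (2*(i:ℝ)+1)^2

lemma Sp_nonneg (p : ℕ) (x : ℝ) : 0 ≤ Sp p x :=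
  Finset.sum_nonneg fun i _ => sq_nonneg _

lemma Sp_ge_first (p : ℕ) (hp : 1 ≤ p) (x : ℝ) : Real.sin x ^ 2 ≤ Sp p x := by
  have h := Finset.single_le_sum (s := Finset.range p)
    (f := fun i : ℕ => Real.sin ((2*(i:ℝ)+1) * x) ^ 2)
    (fun i _ => sq_nonneg _) (Finset.mem_range.2 hp)
  simpa [Sp] using h

lemma Qp_formula (p : ℕ) : 6 * Qp p = (2*(p:ℝ))^3 - 2*(p:ℝ) := by
  induction p with
  | zero => simp [Qp]
  | succ p ih =>
    rw [Qp, Finset.sum_range_succ, ← Qp] at *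
    push_cast
    ring_nf
    ring_nf at ih
    linarith

lemma Qp_pos (p : ℕ) (hp : 1 ≤ p) : 0 < Qp p := by
  have h := Qp_formula p
  have h1 : (1:ℝ) ≤ (p:ℝ) := by exact_mod_cast hp
  nlinarith [h, h1, sq_nonneg ((p:ℝ) - 1), sq_nonneg ((p:ℝ) + 1)]

lemma idS (p : ℕ) (x : ℝ) :
    2*(p:ℝ) * Real.sin (2*x) - Real.sin (2*(p:ℝ)*(2*x)) = 4 * Real.sin (2*x) * Sp p x := by
  induction p with
  | zero => simp [Sp]
  | succ p ih =>
    rw [Sp, Finset.sum_range_succ, ← Sp]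
    have h1 : Real.sin (2*((p:ℝ)+1)*(2*x)) = Real.sin ((4*(p:ℝ)+2)*x + 2*x) := by congr 1; ring
    have h2 : Real.sin (2*(p:ℝ)*(2*x)) = Real.sin ((4*(p:ℝ)+2)*x - 2*x) := by congr 1; ring
    have h3 : Real.cos ((4*(p:ℝ)+2)*x) = 1 - 2 * Real.sin ((2*(p:ℝ)+1)*x)^2 := by
      have harg : ((4*(p:ℝ)+2)*x) = 2*((2*(p:ℝ)+1)*x) := by ring
      rw [harg, Real.cos_two_mul']
      linear_combination Real.sin_sq_add_cos_sq ((2*(p:ℝ)+1)*x)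
    push_cast
    rw [h2, Real.sin_sub] at ih
    rw [h1, Real.sin_add]
    linear_combination ih - 2 * Real.sin (2*x) * h3

lemma Sp_def (p : ℕ) (x : ℝ) : Sp p x = ∑ i ∈ Finset.range p, Real.sin ((2*(i:ℝ)+1) * x) ^ 2 := rfl
lemma Qp_def (p : ℕ) : Qp p = ∑ i ∈ Finset.range p, (2*(i:ℝ)+1)^2 := rfl

-- sin b * a ≤ sin a * b for 0 ≤ a ≤ b ≤ π
lemma sin_mul_le (a b : ℝ) (ha : 0 ≤ a) (hab : a ≤ b) (hb : b ≤ π) :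
    Real.sin b * a ≤ Real.sin a * b := by
  rcases eq_or_lt_of_le (ha.trans hab) with hb0 | hb0
  · have ha0 : a = 0 := le_antisymm (hab.trans hb0.ge) ha
    simp [← hb0, ha0]
  · have hconc := strictConcaveOn_sin_Icc.concaveOn
    have h0 : (0:ℝ) ∈ Set.Icc (0:ℝ) π := ⟨le_refl 0, pi_pos.le⟩
    have hbmem : b ∈ Set.Icc (0:ℝ) π := ⟨hb0.le, hb⟩
    have hw1 : 0 ≤ 1 - a/b := by
      rw [sub_nonneg]; exact div_le_one_of_le₀ hab hb0.le
    have hw2 : 0 ≤ a/b := div_nonneg ha hb0.le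
    have hsum : (1 - a/b) + a/b = 1 := by ring
    have key := hconc.2 h0 hbmem hw1 hw2 hsum
    simp only [smul_eq_mul, mul_zero, Real.sin_zero, zero_add] at key
    rw [div_mul_cancel₀ a hb0.ne'] at key
    calc Real.sin b * a = (a/b * Real.sin b) * b := by field_simp
    _ ≤ Real.sin a * b := mul_le_mul_of_nonneg_right key (hb0.le)

-- |sin b| * a ≤ sin a * b for 0 < a ≤ π/2, a ≤ b
lemma abs_sin_mul_le (a b : ℝ) (ha : 0 < a) (ha2 : a ≤ π/2) (hab : a ≤ b) :
    |Real.sin b| * a ≤ Real.sin a * b := by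
  rcases le_or_gt b π with hbπ | hbπ
  · rw [abs_of_nonneg (Real.sin_nonneg_of_nonneg_of_le_pi (ha.le.trans hab) hbπ)]
    exact sin_mul_le a b ha.le hab hbπ
  · have h1 : |Real.sin b| * a ≤ a := by
      have hs := Real.abs_sin_le_one b
      nlinarith
    have h2 : 2 * a ≤ Real.sin a * b := by
      have hj := Real.mul_le_sin ha.le ha2
      have hπ : (0:ℝ) < π := Real.pi_pos
      have hsa : 0 ≤ Real.sin a := Real.sin_nonneg_of_nonneg_of_le_pi ha.le (by linarith)
      have : (2/π * a) * π ≤ Real.sin a * b :=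
        mul_le_mul hj hbπ.le hπ.le hsa
      calc 2 * a = (2/π * a) * π := by field_simp
      _ ≤ Real.sin a * b := this
    linarith


lemma sin_ge_of_mem (s t : ℝ) (hs : 0 ≤ s) (hs2 : s ≤ π/2) (h1 : s ≤ t) (h2 : t ≤ π - s) :
    Real.sin s ≤ Real.sin t := by
  rcases le_or_gt t (π/2) with ht | ht
  · exact Real.strictMonoOn_sin.monotoneOn ⟨by linarith, hs2⟩ ⟨by linarith, ht⟩ h1
  · rw [← Real.sin_pi_sub t]
    exact Real.strictMonoOn_sin.monotoneOn ⟨by linarith, hs2⟩ ⟨by linarith, by linarith⟩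
      (by linarith)

lemma sin_pi_div_ge (p : ℕ) (hp : 1 ≤ p) :
    3*(p:ℝ)/(2*(p:ℝ)^2+1) ≤ Real.sin (π/(2*(p:ℝ))) := by
  have hπ1 : (3.1415:ℝ) < π := by have := Real.pi_gt_d4; linarith
  have hπ2 : π < 3.1416 := by have := Real.pi_lt_d4; linarith
  match p, hp with
  | 1, _ => norm_num [Real.sin_pi_div_two]
  | 2, _ =>
    have : π/(2*((2:ℕ):ℝ)) = π/4 := by norm_num
    rw [this, Real.sin_pi_div_four]
    have h2 : (1.414:ℝ) < Real.sqrt 2 := by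
      have : (1.414:ℝ) = Real.sqrt (1.414^2) := by
        rw [Real.sqrt_sq]; norm_num
      rw [this]
      apply Real.sqrt_lt_sqrt <;> norm_num
    push_cast
    norm_num
    linarith
  | (k+3), _ =>
    have hP3 : (3:ℝ) ≤ ((k+3:ℕ):ℝ) := by push_cast; linarith [Nat.cast_nonneg (α := ℝ) k]
    set P : ℝ := ((k+3:ℕ):ℝ) with hP
    have hP0 : (0:ℝ) < P := by linarith
    have hπ0 := Real.pi_pos
    have hsq : π^2 < 9.8697 := by nlinarith
    have hπ3 : π^3 < 31.01 := by nlinarith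
    have hP2 : (9:ℝ) ≤ P^2 := by nlinarith
    have hP4 : 9*P^2 ≤ P^4 := by nlinarith
    have poly : 3*P*(32*P^3) ≤ (16*π*P^2 - π^3)*(2*P^2+1) := by nlinarith
    have hu : 0 < π/(2*P) := by positivity
    have hle1 : π/(2*P) ≤ 1 := by rw [div_le_one (by linarith)]; nlinarith
    have hsin : π/(2*P) - (π/(2*P))^3/4 < Real.sin (π/(2*P)) := by
      have := Real.sin_gt_sub_cube hu
      have : 0 < (π/(2*P))^3 := by positivity
      linarith
    have key : 3*P/(2*P^2+1) ≤ π/(2*P) - (π/(2*P))^3/4 := by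
      rw [div_le_iff₀ (by positivity)]
      have expand : (π/(2*P) - (π/(2*P))^3/4)*(2*P^2+1)
          = ((16*π*P^2 - π^3)*(2*P^2+1))/(32*P^3) := by
        field_simp
        ring
      rw [expand, le_div_iff₀ (by positivity)]
      linarith
    linarith


lemma caseB (p : ℕ) (hp : 1 ≤ p) (t : ℝ) (h1 : π/(2*(p:ℝ)) < t) (h2 : t < π) :
    Real.sin (2*(p:ℝ)*t) * (3*(p:ℝ)) ≤ (2*(p:ℝ)^2+1) * Real.sin t := by
  have hp' : (1:ℝ) ≤ (p:ℝ) := by exact_mod_cast hp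
  have hπ := Real.pi_pos
  have ht0 : 0 < t := lt_trans (by positivity) h1
  have hst : 0 ≤ Real.sin t := Real.sin_nonneg_of_nonneg_of_le_pi ht0.le h2.le
  rcases le_or_gt t (π - π/(2*(p:ℝ))) with hBB | hBB
  · -- middle region: sin t ≥ sin(π/(2p)) ≥ 3p/(2p²+1)
    have hmin : Real.sin (π/(2*(p:ℝ))) ≤ Real.sin t := by
      apply sin_ge_of_mem _ _ (by positivity) _ h1.le hBB
      rw [div_le_div_iff₀ (by positivity) (by norm_num)]
      nlinarith
    have hval := sin_pi_div_ge p hp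
    have hs1 : Real.sin (2*(p:ℝ)*t) ≤ 1 := Real.sin_le_one _
    have hd : (0:ℝ) < 2*(p:ℝ)^2+1 := by positivity
    have h3 : 3*(p:ℝ) ≤ (2*(p:ℝ)^2+1) * Real.sin t := by
      have := hval.trans hmin
      rw [div_le_iff₀ hd] at this
      nlinarith
    nlinarith
  · -- near π : sin(2pt) ≤ 0
    have hper : Real.sin (2*(p:ℝ)*t) = Real.sin (2*(p:ℝ)*(t-π)) := by
      have := Real.sin_add_int_mul_two_pi (2*(p:ℝ)*(t-π)) (p:ℤ)
      rw [← this]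
      congr 1
      push_cast
      ring
    have hneg : Real.sin (2*(p:ℝ)*(t-π)) ≤ 0 := by
      have hd : 2*(p:ℝ)*(π/(2*(p:ℝ))) = π := by field_simp
      apply Real.sin_nonpos_of_nonpos_of_neg_pi_le
      · nlinarith
      · nlinarith [hd, mul_pos (show (0:ℝ) < 2*(p:ℝ) by positivity)
          (show (0:ℝ) < t - π + π/(2*(p:ℝ)) by linarith)]
    rw [hper]
    nlinarith

lemma Sp_lower (p : ℕ) (hp : 1 ≤ p) (x : ℝ) (hx1 : π/(4*(p:ℝ)) < x) (hx2 : x < π/2) :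
    Qp p ≤ 4*(p:ℝ)^2 * Sp p x := by
  have hp' : (1:ℝ) ≤ (p:ℝ) := by exact_mod_cast hp
  have hπ := Real.pi_pos
  have hx0 : 0 < x := lt_trans (by positivity) hx1
  have hid := idS p x
  have hB := caseB p hp (2*x) (by rw [div_lt_iff₀ (by positivity)] at hx1 ⊢; nlinarith) (by linarith)
  have h6 := Qp_formula p
  have hs : 0 < Real.sin (2*x) := Real.sin_pos_of_pos_of_lt_pi (by linarith) (by linarith)
  have key : 6 * Real.sin (2*x) * (4*(p:ℝ)^2 * Sp p x - Qp p)
      = 2*(p:ℝ)*((2*(p:ℝ)^2+1)*Real.sin (2*x) - Real.sin (2*(p:ℝ)*(2*x))*(3*(p:ℝ))) := by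
    linear_combination (-6*(p:ℝ)^2) * hid - Real.sin (2*x) * h6
  nlinarith [key, hB, hs]

lemma lemL (p l : ℕ) (hp : 1 ≤ p) (hl : 2*p ≤ l) (x : ℝ) (hx : 0 < x) (hx2 : x < π/2) :
    Qp p * Real.sin ((l:ℝ)*x)^2 ≤ (l:ℝ)^2 * Sp p x := by
  have hp' : (1:ℝ) ≤ (p:ℝ) := by exact_mod_cast hp
  have hl' : 2*(p:ℝ) ≤ (l:ℝ) := by exact_mod_cast hl
  have hπ := Real.pi_pos
  rcases le_or_gt x (π/(4*(p:ℝ))) with hA | hB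
  · rw [Qp_def, Sp_def, Finset.sum_mul, Finset.mul_sum]
    apply Finset.sum_le_sum
    intro i hi
    have hi' : (i:ℝ) ≤ (p:ℝ) - 1 := by
      have : i + 1 ≤ p := Finset.mem_range.1 hi
      have := (Nat.cast_le (α := ℝ)).2 this
      push_cast at this; linarith
    have ha : (0:ℝ) < (2*(i:ℝ)+1) * x := by positivity
    have ha2 : (2*(i:ℝ)+1) * x ≤ π/2 := by
      have h1 : (2*(i:ℝ)+1) * x ≤ (2*(p:ℝ)) * x := by nlinarith
      have h2 : (2*(p:ℝ)) * x ≤ (2*(p:ℝ)) * (π/(4*(p:ℝ))) := by nlinarith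
      have h3 : (2*(p:ℝ)) * (π/(4*(p:ℝ))) = π/2 := by field_simp; ring
      linarith
    have hab : (2*(i:ℝ)+1) * x ≤ (l:ℝ) * x := by nlinarith
    have hK := abs_sin_mul_le _ _ ha ha2 hab
    have h2 : Real.sin ((l:ℝ)*x)^2 * ((2*(i:ℝ)+1)*x)^2
        ≤ Real.sin ((2*(i:ℝ)+1)*x)^2 * ((l:ℝ)*x)^2 := by
      have hm := mul_self_le_mul_self (by positivity) hK
      calc Real.sin ((l:ℝ)*x)^2 * ((2*(i:ℝ)+1)*x)^2
          = (|Real.sin ((l:ℝ)*x)| * ((2*(i:ℝ)+1)*x)) * (|Real.sin ((l:ℝ)*x)| * ((2*(i:ℝ)+1)*x)) := by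
            rw [← sq_abs]; ring
        _ ≤ (Real.sin ((2*(i:ℝ)+1)*x) * ((l:ℝ)*x)) * (Real.sin ((2*(i:ℝ)+1)*x) * ((l:ℝ)*x)) := hm
        _ = Real.sin ((2*(i:ℝ)+1)*x)^2 * ((l:ℝ)*x)^2 := by ring
    have hx2' : (0:ℝ) < x^2 := by positivity
    nlinarith [h2, hx2']
  · have hSp := Sp_lower p hp x hB hx2
    have hs1 : Real.sin ((l:ℝ)*x)^2 ≤ 1 := Real.sin_sq_le_one _
    have hQ := Qp_pos p hp
    have hS := Sp_nonneg p x
    calc Qp p * Real.sin ((l:ℝ)*x)^2 ≤ Qp p := by nlinarith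
    _ ≤ 4*(p:ℝ)^2 * Sp p x := hSp
    _ ≤ (l:ℝ)^2 * Sp p x :=
      mul_le_mul_of_nonneg_right (by nlinarith) hS


lemma main_ineq (p q : ℕ) (hp : 1 ≤ p) (hpq : p ≤ q) (x : ℝ) (hx : 0 < x) (hx2 : x < π/2) :
    Qp p * Sp q x ≤ Qp q * Sp p x := by
  have hsplitS : Sp q x = Sp p x + ∑ i ∈ Finset.Ico p q, Real.sin ((2*(i:ℝ)+1)*x)^2 := by
    rw [Sp_def, Sp_def, ← Finset.sum_range_add_sum_Ico _ hpq]
  have hsplitQ : Qp q = Qp p + ∑ i ∈ Finset.Ico p q, (2*(i:ℝ)+1)^2 := by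
    rw [Qp_def, Qp_def, ← Finset.sum_range_add_sum_Ico _ hpq]
  have key : ∀ i ∈ Finset.Ico p q,
      Qp p * Real.sin ((2*(i:ℝ)+1)*x)^2 ≤ (2*(i:ℝ)+1)^2 * Sp p x := by
    intro i hi
    have hip : p ≤ i := (Finset.mem_Ico.1 hi).1
    have h := lemL p (2*i+1) hp (by omega) x hx hx2
    push_cast at h
    convert h using 3 <;> push_cast <;> ring
  calc Qp p * Sp q x
      = Qp p * Sp p x + ∑ i ∈ Finset.Ico p q, Qp p * Real.sin ((2*(i:ℝ)+1)*x)^2 := by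
        rw [hsplitS, mul_add, Finset.mul_sum]
    _ ≤ Qp p * Sp p x + ∑ i ∈ Finset.Ico p q, (2*(i:ℝ)+1)^2 * Sp p x :=
        add_le_add (le_refl _) (Finset.sum_le_sum key)
    _ = (Qp p + ∑ i ∈ Finset.Ico p q, (2*(i:ℝ)+1)^2) * Sp p x := by
        rw [add_mul, Finset.sum_mul]
    _ = Qp q * Sp p x := by rw [← hsplitQ]

lemma tendsto_sin_mul_div (c : ℝ) :
    Tendsto (fun x : ℝ => Real.sin (c*x)/x) (nhdsWithin 0 {(0:ℝ)}ᶜ) (nhds c) := by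
  have hd : HasDerivAt (fun x : ℝ => Real.sin (c*x)) c 0 := by
    have h1 := (Real.hasDerivAt_sin (c*0)).comp 0 ((hasDerivAt_id (0:ℝ)).const_mul c)
    simpa [Function.comp_def] using h1
  rw [hasDerivAt_iff_tendsto_slope] at hd
  refine hd.congr' ?_
  filter_upwards [self_mem_nhdsWithin] with x hx
  simp [slope_def_field]

lemma tendsto_Sp (p : ℕ) :
    Tendsto (fun x : ℝ => Sp p x / x^2) (nhdsWithin 0 (Set.Ioi 0)) (nhds (Qp p)) := by
  have hsum : Tendsto (fun x : ℝ => ∑ i ∈ Finset.range p, (Real.sin ((2*(i:ℝ)+1)*x)/x)^2)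
      (nhdsWithin 0 {(0:ℝ)}ᶜ) (nhds (∑ i ∈ Finset.range p, (2*(i:ℝ)+1)^2)) := by
    apply tendsto_finset_sum
    intro i _
    exact (tendsto_sin_mul_div (2*(i:ℝ)+1)).pow 2
  rw [← Qp_def] at hsum
  have hmono : nhdsWithin (0:ℝ) (Set.Ioi 0) ≤ nhdsWithin 0 {(0:ℝ)}ᶜ :=
    nhdsWithin_mono 0 (fun x hx => ne_of_gt hx)
  refine (hsum.mono_left hmono).congr' ?_
  filter_upwards [self_mem_nhdsWithin] with x hx
  have hx0 : x ≠ 0 := ne_of_gt hx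
  rw [Sp_def, Finset.sum_div]
  congr 1
  ext i
  rw [div_pow]


lemma idS' (p : ℕ) (t : ℝ) :
    2*(p:ℝ) * Real.sin t - Real.sin (2*(p:ℝ)*t) = 4 * Real.sin t * Sp p (t/2) := by
  have h := idS p (t/2)
  rw [show 2*(t/2) = t by ring] at h
  exact h

theorem stmt_1 (m n : ℕ) (hn : 2 ≤ n) (hnm : n < m) (hme : Even m) (hne : Even n) :
    sInf ((fun t : ℝ =>
        ((n : ℝ) * Real.sin t - Real.sin ((n : ℝ) * t)) /
          ((m : ℝ) * Real.sin t - Real.sin ((m : ℝ) * t))) '' Set.Ioo 0 π) =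
      ((n : ℝ) ^ 3 - n) / ((m : ℝ) ^ 3 - m) := by
  obtain ⟨p, hp⟩ := hne
  obtain ⟨q, hq⟩ := hme
  have hp1 : 1 ≤ p := by omega
  have hq1 : 1 ≤ q := by omega
  have hpq : p ≤ q := by omega
  have hcn : (n:ℝ) = 2*(p:ℝ) := by rw [hp]; push_cast; ring
  have hcm : (m:ℝ) = 2*(q:ℝ) := by rw [hq]; push_cast; ring
  have hQp := Qp_pos p hp1
  have hQq := Qp_pos q hq1
  have hπ := Real.pi_pos
  set f : ℝ → ℝ := fun t : ℝ =>
      ((n : ℝ) * Real.sin t - Real.sin ((n : ℝ) * t)) /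
        ((m : ℝ) * Real.sin t - Real.sin ((m : ℝ) * t)) with hf
  set c : ℝ := ((n : ℝ) ^ 3 - n) / ((m : ℝ) ^ 3 - m) with hcdef
  have hc : c = Qp p / Qp q := by
    rw [hcdef, hcn, hcm, ← Qp_formula, ← Qp_formula, mul_div_mul_left _ _ (by norm_num)]
  -- basic facts on Ioo
  have hfacts : ∀ t ∈ Set.Ioo (0:ℝ) π, 0 < Real.sin t ∧ 0 < Sp q (t/2) ∧
      f t = Sp p (t/2) / Sp q (t/2) := by
    intro t ht
    obtain ⟨ht0, htπ⟩ := ht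
    have hst : 0 < Real.sin t := Real.sin_pos_of_pos_of_lt_pi ht0 htπ
    have hst2 : 0 < Real.sin (t/2) := Real.sin_pos_of_pos_of_lt_pi (by linarith) (by linarith)
    have hSq : 0 < Sp q (t/2) := lt_of_lt_of_le (by positivity) (Sp_ge_first q hq1 (t/2))
    refine ⟨hst, hSq, ?_⟩
    rw [hf]
    simp only
    rw [hcn, hcm, idS' p t, idS' q t, mul_div_mul_left _ _ (by positivity)]
  have hlb : ∀ y ∈ (f '' Set.Ioo 0 π), c ≤ y := by
    rintro y ⟨t, ht, rfl⟩
    obtain ⟨hst, hSq, hfeq⟩ := hfacts t ht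
    rw [hfeq, hc, div_le_div_iff₀ hQq hSq]
    have := main_ineq p q hp1 hpq (t/2) (by linarith [ht.1]) (by linarith [ht.2])
    linarith
  have hmem : (π/2) ∈ Set.Ioo (0:ℝ) π := ⟨by linarith, by linarith⟩
  have hne' : (f '' Set.Ioo 0 π).Nonempty := ⟨f (π/2), Set.mem_image_of_mem f hmem⟩
  have hbdd : BddBelow (f '' Set.Ioo 0 π) := ⟨c, hlb⟩
  apply le_antisymm
  · -- sInf ≤ c via the limit at 0+
    have h2 : Tendsto (fun t : ℝ => t/2) (nhdsWithin 0 (Set.Ioi 0)) (nhdsWithin 0 (Set.Ioi 0)) := by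
      rw [tendsto_nhdsWithin_iff]
      constructor
      · have : Tendsto (fun t : ℝ => t/2) (nhds 0) (nhds 0) := by
          simpa using (continuous_id.div_const 2).tendsto (0:ℝ)
        exact this.mono_left nhdsWithin_le_nhds
      · filter_upwards [self_mem_nhdsWithin] with t ht
        exact div_pos (Set.mem_Ioi.mp ht) (by norm_num)
    have hG : Tendsto (fun y : ℝ => (Sp p y/y^2)/(Sp q y/y^2))
        (nhdsWithin 0 (Set.Ioi 0)) (nhds (Qp p / Qp q)) :=
      (tendsto_Sp p).div (tendsto_Sp q) hQq.ne'
    have hcomp := hG.comp h2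
    have htend : Tendsto f (nhdsWithin 0 (Set.Ioi 0)) (nhds c) := by
      rw [hc]
      refine hcomp.congr' ?_
      filter_upwards [Ioo_mem_nhdsGT hπ] with t ht
      obtain ⟨hst, hSq, hfeq⟩ := hfacts t ht
      have hy0 : (0:ℝ) < t/2 := by linarith [ht.1]
      have hy2 : (t/2)^2 ≠ 0 := by positivity
      simp only [Function.comp_apply]
      rw [div_div_div_comm, div_self hy2, div_one, hfeq]
    apply le_of_forall_pos_le_add
    intro ε hε
    have hev1 : ∀ᶠ t in nhdsWithin (0:ℝ) (Set.Ioi 0), f t < c + ε :=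
      htend.eventually_lt_const (by linarith)
    have hev2 : ∀ᶠ t in nhdsWithin (0:ℝ) (Set.Ioi 0), t ∈ Set.Ioo (0:ℝ) π :=
      Ioo_mem_nhdsGT hπ
    obtain ⟨t, ht1, ht2⟩ := (hev1.and hev2).exists
    exact le_trans (csInf_le hbdd (Set.mem_image_of_mem f ht2)) (by linarith)
  · exact le_csInf hne' hlb
end

section
/- Let m > n ≥ 2 be integers with m − n even. Then for every t ∈ (0, π), (m³ − m)·(n·sin t − sin(n t)) ≥ (n³ − n)·(m·sin t − sin(m t)). -/
open Real


lemma aux_nonneg_on {b : ℝ} {f f' : ℝ → ℝ} (hd : ∀ x, HasDerivAt f (f' x) x)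
    (h0 : f 0 = 0) (hpos : ∀ x, 0 ≤ x → x ≤ b → 0 ≤ f' x) {x : ℝ} (hx : 0 ≤ x) (hxb : x ≤ b) :
    0 ≤ f x := by
  have hmono : MonotoneOn f (Set.Icc (0:ℝ) b) := by
    apply monotoneOn_of_deriv_nonneg (convex_Icc 0 b)
      (fun y _ => (hd y).differentiableAt.continuousAt.continuousWithinAt)
      (fun y _ => (hd y).differentiableAt.differentiableWithinAt)
    intro y hy
    rw [(hd y).deriv]
    rw [interior_Icc] at hy
    exact hpos y hy.1.le hy.2.le
  have := hmono (Set.mem_Icc.2 ⟨le_refl 0, le_trans hx hxb⟩) (Set.mem_Icc.2 ⟨hx, hxb⟩) hx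
  rw [h0] at this
  exact this

lemma aux_nonneg {f f' : ℝ → ℝ} (hd : ∀ x, HasDerivAt f (f' x) x)
    (h0 : f 0 = 0) (hpos : ∀ x, 0 ≤ x → 0 ≤ f' x) {x : ℝ} (hx : 0 ≤ x) : 0 ≤ f x :=
  aux_nonneg_on hd h0 (fun y hy _ => hpos y hy) hx (le_refl x)

lemma sin_ge_cubic {x : ℝ} (hx : 0 ≤ x) : x - x^3/6 ≤ sin x := by
  have h := aux_nonneg (f := fun x => sin x - (x - x^3/6))
    (f' := fun x => cos x - (1 - x^2/2)) (fun y => by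
      have : HasDerivAt (fun x:ℝ => sin x - (x - x^3/6)) (cos y - (1 - 3*y^2/6)) y := by
        exact (Real.hasDerivAt_sin y).sub ((hasDerivAt_id y).sub ((hasDerivAt_pow 3 y).div_const 6))
      convert this using 1; ring) (by norm_num)
    (fun y _ => by
      have := Real.one_sub_sq_div_two_le_cos (x := y); linarith) hx
  linarith

lemma cos_le_quart {x : ℝ} (hx : 0 ≤ x) : cos x ≤ 1 - x^2/2 + x^4/24 := by
  have h := aux_nonneg (f := fun x => 1 - x^2/2 + x^4/24 - cos x)
    (f' := fun x => -(x - x^3/6) + sin x) (fun y => by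
      have : HasDerivAt (fun x:ℝ => 1 - x^2/2 + x^4/24 - cos x)
          (0 - 2*y^1/2 + 4*y^3/24 - (-sin y)) y := by
        exact (((hasDerivAt_const y (1:ℝ)).sub ((hasDerivAt_pow 2 y).div_const 2)).add
          ((hasDerivAt_pow 4 y).div_const 24)).sub (Real.hasDerivAt_cos y)
      convert this using 1; ring) (by norm_num)
    (fun y hy => by have := sin_ge_cubic hy; linarith) hx
  linarith

lemma sin_le_quint {x : ℝ} (hx : 0 ≤ x) : sin x ≤ x - x^3/6 + x^5/120 := by
  have h := aux_nonneg (f := fun x => x - x^3/6 + x^5/120 - sin x)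
    (f' := fun x => 1 - x^2/2 + x^4/24 - cos x) (fun y => by
      have : HasDerivAt (fun x:ℝ => x - x^3/6 + x^5/120 - sin x)
          (1 - 3*y^2/6 + 5*y^4/120 - cos y) y := by
        exact (((hasDerivAt_id y).sub ((hasDerivAt_pow 3 y).div_const 6)).add
          ((hasDerivAt_pow 5 y).div_const 120)).sub (Real.hasDerivAt_sin y)
      convert this using 1; ring) (by norm_num)
    (fun y hy => by have := cos_le_quart hy; linarith) hx
  linarith

lemma cos_ge_six {x : ℝ} (hx : 0 ≤ x) : 1 - x^2/2 + x^4/24 - x^6/720 ≤ cos x := by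
  have h := aux_nonneg (f := fun x => cos x - (1 - x^2/2 + x^4/24 - x^6/720))
    (f' := fun x => -sin x - (-(x - x^3/6 + x^5/120))) (fun y => by
      have : HasDerivAt (fun x:ℝ => cos x - (1 - x^2/2 + x^4/24 - x^6/720))
          (-sin y - (0 - 2*y^1/2 + 4*y^3/24 - 6*y^5/720)) y := by
        exact (Real.hasDerivAt_cos y).sub ((((hasDerivAt_const y (1:ℝ)).sub
          ((hasDerivAt_pow 2 y).div_const 2)).add ((hasDerivAt_pow 4 y).div_const 24)).sub
          ((hasDerivAt_pow 6 y).div_const 720))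
      convert this using 1; ring) (by norm_num)
    (fun y hy => by have := sin_le_quint hy; linarith) hx
  linarith

lemma sin_ge_mul_cos {t : ℝ} (h0 : 0 ≤ t) (h1 : t ≤ π) : t * cos t ≤ sin t := by
  have h := aux_nonneg_on (b := π) (f := fun x => sin x - x * cos x)
    (f' := fun x => x * sin x) (fun y => by
      have : HasDerivAt (fun x:ℝ => sin x - x * cos x)
          (cos y - (1 * cos y + y * (-sin y))) y := by
        exact (Real.hasDerivAt_sin y).sub ((hasDerivAt_id y).mul (Real.hasDerivAt_cos y))
      convert this using 1; ring) (by norm_num)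
    (fun y hy hyp => mul_nonneg hy (Real.sin_nonneg_of_nonneg_of_le_pi hy hyp)) h0 h1
  linarith

lemma sin_ge_cubic_mul_cos {t : ℝ} (h0 : 0 ≤ t) (h1 : t ≤ π/2) :
    (t + t^3/3) * cos t ≤ sin t := by
  have h := aux_nonneg_on (b := π/2) (f := fun x => sin x - (x + x^3/3) * cos x)
    (f' := fun x => (x + x^3/3) * sin x - x^2 * cos x) (fun y => by
      have : HasDerivAt (fun x:ℝ => sin x - (x + x^3/3) * cos x)
          (cos y - ((1 + 3*y^2/3) * cos y + (y + y^3/3) * (-sin y))) y := by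
        exact (Real.hasDerivAt_sin y).sub
          (((hasDerivAt_id y).add ((hasDerivAt_pow 3 y).div_const 3)).mul (Real.hasDerivAt_cos y))
      convert this using 1; ring) (by norm_num) ?_ h0 h1
  · linarith
  · intro y hy hyp
    have hc : 0 ≤ cos y := Real.cos_nonneg_of_mem_Icc ⟨by linarith, hyp⟩
    have hs : y * cos y ≤ sin y := sin_ge_mul_cos hy (by linarith [Real.pi_pos])
    have hmul := mul_le_mul_of_nonneg_left hs (by positivity : (0:ℝ) ≤ y + y^3/3)
    have h4 : 0 ≤ y^4/3 * cos y := by positivity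
    nlinarith [hmul, h4]


section RPQ
variable {u : ℝ}

lemma R_nonneg (h0 : 0 ≤ u) (h1 : u ≤ π) : 0 ≤ 4*u + 2*u*cos u - 6*sin u := by
  have hc := cos_ge_six h0
  have hs := sin_le_quint h0
  have hpi : u ≤ 3.15 := h1.trans (by linarith [Real.pi_lt_d2])
  have h12 : u^2 ≤ 12 := by nlinarith
  have key : 0 ≤ u^5 * (12 - u^2) := mul_nonneg (by positivity) (by linarith)
  nlinarith [mul_le_mul_of_nonneg_left hc (by linarith : (0:ℝ) ≤ 2*u)]

lemma P_nonneg (h0 : 0 ≤ u) (h1 : u ≤ π) :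
    1458 * sin u ≤ (27*u + u^3) * (32 + 22*cos u) := by
  rcases le_or_gt u (5/2) with hu | hu
  · -- region I
    have hc := cos_ge_six h0
    have hs := sin_le_quint h0
    have hmul := mul_le_mul_of_nonneg_left hc (by positivity : (0:ℝ) ≤ 22*(27*u+u^3))
    have h4 : u^4 ≤ (5/2)^4 := pow_le_pow_left₀ h0 hu 4
    have key : 0 ≤ u^5 * (576 + 33*u^2 - 11*u^4) :=
      mul_nonneg (by positivity) (by nlinarith [sq_nonneg u])
    nlinarith [hmul, hs, key]
  · -- region II : u ∈ (5/2, π], set w = π - u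
    set w := π - u with hw
    have hw0 : 0 ≤ w := by simp only [hw]; linarith
    have hwb : w ≤ 6416/10000 := by
      have := Real.pi_lt_d6; simp only [hw]; linarith
    have hsin : sin u = sin w := by rw [hw, Real.sin_pi_sub]
    have hcos : cos u = -cos w := by rw [hw, Real.cos_pi_sub]; ring
    have hsw : sin w ≤ w := Real.sin_le hw0
    have hcw := cos_le_quart hw0
    have hu3 : (5/2:ℝ)^3 ≤ u^3 := pow_le_pow_left₀ (by norm_num) hu.le 3
    have hw2 : w^2 ≤ 412/1000 := by nlinarith
    have hw4 : w^4 ≤ (412/1000) * w^2 := by nlinarith [mul_le_mul_of_nonneg_left hw2 (sq_nonneg w)]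
    have hbr : (10:ℝ) + 11*w^2 - (11/12)*w^4 ≤ 32 - 22*cos w := by nlinarith
    have hbrpos : (0:ℝ) ≤ 10 + 11*w^2 - (11/12)*w^4 := by nlinarith
    have hup : (83125/1000 : ℝ) ≤ 27*u + u^3 := by nlinarith
    rw [hsin, hcos]
    have key : 1458 * w ≤ (83125/1000) * (10 + 11*w^2 - (11/12)*w^4) := by
      nlinarith [sq_nonneg (w - 729/883), hw2, hw4]
    calc 1458 * sin w ≤ 1458 * w := by linarith
    _ ≤ (83125/1000) * (10 + 11*w^2 - (11/12)*w^4) := key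
    _ ≤ (27*u+u^3) * (10 + 11*w^2 - (11/12)*w^4) := mul_le_mul_of_nonneg_right hup hbrpos
    _ ≤ (27*u+u^3) * (32 - 22*cos w) := mul_le_mul_of_nonneg_left hbr (by nlinarith)
    _ = (27*u+u^3) * (32 + 22 * -cos w) := by ring

lemma Q_nonneg {a : ℝ} (ha : 3 ≤ a) (h0 : 0 ≤ u) (h1 : u ≤ π) :
    18*a^4*sin u ≤ (3*a^2*u + u^3) * (4*(a^2-1) + 2*(a^2+2)*cos u) := by
  have hP := P_nonneg h0 h1
  have hR := R_nonneg h0 h1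
  have ha9 : 0 ≤ a^2 - 9 := by nlinarith
  have hcos : 0 ≤ 1 - cos u := by linarith [Real.cos_le_one u]
  have e : (3*a^2*u + u^3) * (4*(a^2-1) + 2*(a^2+2)*cos u) - 18*a^4*sin u
      = a^2/9 * ((27*u + u^3)*(32 + 22*cos u) - 1458*sin u)
        + (3*a^2*(a^2-9)) * (4*u + 2*u*cos u - 6*sin u)
        + (4*u^3/9*(a^2-9)) * (1 - cos u) := by ring
  have t1 : 0 ≤ a^2/9 * ((27*u + u^3)*(32 + 22*cos u) - 1458*sin u) :=
    mul_nonneg (by positivity) (by linarith)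
  have t2 : 0 ≤ (3*a^2*(a^2-9)) * (4*u + 2*u*cos u - 6*sin u) :=
    mul_nonneg (by positivity) hR
  have t3 : 0 ≤ (4*u^3/9*(a^2-9)) * (1 - cos u) :=
    mul_nonneg (by positivity) hcos
  linarith
end RPQ


lemma E_pos {a t v : ℝ} (ha : 3 ≤ a) (ht0 : 0 < t) (ht : t ≤ π/2) (hv0 : 0 < v) (hv : v ≤ π)
    (hyp : 3*a^2*v + v^3 ≤ a^3*(3*t + t^3)) :
    6*a*cos t*sin v ≤ sin t * (4*(a^2-1) + 2*(a^2+2)*cos v) := by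
  have hct : 0 ≤ cos t := Real.cos_nonneg_of_mem_Icc ⟨by linarith [Real.pi_pos], ht⟩
  have hB : 0 ≤ 4*(a^2-1) + 2*(a^2+2)*cos v := by
    nlinarith [Real.neg_one_le_cos v]
  have hst : (t + t^3/3) * cos t ≤ sin t := sin_ge_cubic_mul_cos ht0.le ht
  have hQ := Q_nonneg ha hv0.le hv
  -- 6*a*sin v ≤ (t + t^3/3) * B
  have h1 : (3*a^2*v + v^3) * (4*(a^2-1) + 2*(a^2+2)*cos v)
      ≤ (a^3*(3*t + t^3)) * (4*(a^2-1) + 2*(a^2+2)*cos v) :=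
    mul_le_mul_of_nonneg_right hyp hB
  have ha0 : (0:ℝ) < a := by linarith
  have h2 : 6*a*sin v ≤ (t + t^3/3) * (4*(a^2-1) + 2*(a^2+2)*cos v) := by
    have h3 : (3*a^3) * (6*a*sin v) ≤ (3*a^3) * ((t + t^3/3) * (4*(a^2-1) + 2*(a^2+2)*cos v)) := by
      nlinarith [hQ, h1]
    exact le_of_mul_le_mul_left h3 (by positivity)
  have h4 : (t + t^3/3) * (4*(a^2-1) + 2*(a^2+2)*cos v) * cos t ≤ sin t * (4*(a^2-1) + 2*(a^2+2)*cos v) := by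
    have := mul_le_mul_of_nonneg_right hst hB
    nlinarith [this]
  nlinarith [mul_le_mul_of_nonneg_right h2 hct]

lemma E_crude {a t : ℝ} (ha : 3 ≤ a) (ht0 : 0 < t) (ht : t ≤ π/2) (hta : 2*π ≤ a*t)
    {S : ℝ} (hS : S ≤ 1) :
    6*a*cos t*S ≤ sin t * (2*(a^2-4)) := by
  have hct : 0 ≤ cos t := Real.cos_nonneg_of_mem_Icc ⟨by linarith [Real.pi_pos], ht⟩
  have hst : t * cos t ≤ sin t := sin_ge_mul_cos ht0.le (by linarith [Real.pi_pos])
  have ha4 : (0:ℝ) ≤ a^2 - 4 := by nlinarith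
  have hpi : (3.141592:ℝ) ≤ π := by linarith [Real.pi_gt_d6]
  -- a * (sin t * 2*(a^2-4)) ≥ a*t*cos t*2*(a^2-4) ≥ 2π cos t 2(a^2-4) ≥ 6 a^2 cos t = a * (6 a cos t)
  have key : a * (6*a*cos t*S) ≤ a * (sin t * (2*(a^2-4))) := by
    have e1 : 6*a*cos t*S ≤ 6*a*cos t := by
      nlinarith [mul_nonneg (mul_nonneg (by linarith : (0:ℝ) ≤ 6*a) hct) (sub_nonneg.2 hS)]
    have e2 : (2*π) * (cos t * (2*(a^2-4))) ≤ (a*t) * (cos t * (2*(a^2-4))) :=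
      mul_le_mul_of_nonneg_right hta (by positivity)
    have e3 : a * (t * cos t) * (2*(a^2-4)) ≤ a * sin t * (2*(a^2-4)) := by
      nlinarith [mul_le_mul_of_nonneg_right hst (by positivity : (0:ℝ) ≤ 2*(a^2-4))]
    have hpilt : π ≤ 3.15 := by linarith [Real.pi_lt_d2]
    have ha9 : (0:ℝ) ≤ a^2 - 9 := by nlinarith
    have hC : (0:ℝ) ≤ 4*π*(a^2-4) - 6*a^2 := by
      nlinarith [mul_nonneg (by linarith : (0:ℝ) ≤ 4*π - 6) ha9]
    have e4 : 6*a^2*cos t ≤ 4*π*(a^2-4)*cos t := by nlinarith [mul_nonneg hC hct]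
    nlinarith [e1, e2, e3, e4]
  exact le_of_mul_le_mul_left key (by linarith)


lemma hyp_lemma {a s v : ℝ} (ha : 3 ≤ a) (hv0 : 0 < v) (hvpi : v ≤ π)
    (has : a*s = v + π) (hs0 : 0 ≤ s) :
    3*a^2*v + v^3 ≤ a^3*(3*s + s^3) := by
  have hpiub : π ≤ 3.15 := by linarith [Real.pi_lt_d2]
  have hv3 : v^3 ≤ π^3 := pow_le_pow_left₀ hv0.le hvpi 3
  have hpi2 : π^2 ≤ 27 := by nlinarith [Real.pi_pos]
  have hpi3 : π^3 ≤ 27*π := by nlinarith [mul_le_mul_of_nonneg_right hpi2 Real.pi_pos.le]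
  have h3 : 27*π ≤ 3*a^2*π := by
    nlinarith [mul_le_mul_of_nonneg_right (show (9:ℝ) ≤ a^2 by nlinarith) Real.pi_pos.le]
  have hs3 : 0 ≤ a^3*s^3 := by positivity
  have e : a^3*(3*s + s^3) = 3*a^2*(a*s) + a^3*s^3 := by ring
  rw [e, has]
  linarith

lemma Blb {a c : ℝ} (ha : 3 ≤ a) (hc : -1 ≤ c) (hc2 : c ≤ 1) :
    2*(a^2-4) ≤ 4*(a^2-1) + 2*(a^2+2)*c := by nlinarith

lemma E_nonneg (n : ℕ) (hn : 2 ≤ n) {t : ℝ} (ht0 : 0 < t) (htp : t < π) :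
    6*((n:ℝ)+1)*cos t*sin (((n:ℝ)+1)*t) ≤
      sin t * (4*(((n:ℝ)+1)^2-1) + 2*(((n:ℝ)+1)^2+2)*cos (((n:ℝ)+1)*t)) := by
  obtain ⟨a, ha_def⟩ : ∃ a : ℝ, a = (n:ℝ)+1 := ⟨_, rfl⟩
  rw [← ha_def]
  have hn' : (2:ℝ) ≤ (n:ℝ) := by exact_mod_cast hn
  have ha : 3 ≤ a := by rw [ha_def]; linarith
  have hst : 0 ≤ sin t := sin_nonneg_of_nonneg_of_le_pi ht0.le htp.le
  have hB : 0 ≤ 4*(a^2-1) + 2*(a^2+2)*cos (a*t) := by nlinarith [Real.neg_one_le_cos (a*t)]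
  have hBlb : sin t * (2*(a^2-4)) ≤ sin t * (4*(a^2-1) + 2*(a^2+2)*cos (a*t)) :=
    mul_le_mul_of_nonneg_left (Blb ha (Real.neg_one_le_cos (a*t)) (Real.cos_le_one (a*t))) hst
  rcases le_or_gt (cos t * sin (a*t)) 0 with hcs | hcs
  · nlinarith [mul_nonneg hst hB]
  rcases mul_pos_iff.1 hcs with ⟨hc, hs⟩ | ⟨hc, hs⟩
  · -- cos t > 0, sin(at) > 0
    have ht2 : t ≤ π/2 := by
      by_contra hcon
      push_neg at hcon
      have := Real.cos_nonpos_of_pi_div_two_le_of_le hcon.le (by linarith [Real.pi_pos])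
      linarith
    rcases le_or_gt (a*t) π with hu | hu
    · exact E_pos ha ht0 ht2 (by positivity) hu (le_of_eq (by ring))
    · have h2pi : 2*π ≤ a*t := by
        by_contra hcon
        push_neg at hcon
        have h1 : sin (a*t) = -sin (a*t - π) := by rw [Real.sin_sub_pi]; ring
        have h2 : 0 ≤ sin (a*t - π) :=
          sin_nonneg_of_nonneg_of_le_pi (by linarith) (by linarith)
        linarith
      have hc2 := E_crude ha ht0 ht2 h2pi (Real.sin_le_one (a*t))
      linarith
  · -- cos t < 0, sin(at) < 0
    have ht2 : π/2 < t := by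
      by_contra hcon
      push_neg at hcon
      have := Real.cos_nonneg_of_mem_Icc ⟨by linarith [Real.pi_pos], hcon⟩
      linarith
    obtain ⟨s, hs_def⟩ : ∃ s : ℝ, s = π - t := ⟨_, rfl⟩
    have hs0 : 0 < s := by rw [hs_def]; linarith
    have hs2 : s ≤ π/2 := by rw [hs_def]; linarith
    have hsin_t : sin t = sin s := by rw [hs_def, Real.sin_pi_sub]
    have hcos_t : cos t = -cos s := by rw [hs_def, Real.cos_pi_sub]; ring
    have hcos_s : 0 < cos s := by
      rw [hs_def]
      apply Real.cos_pos_of_mem_Ioo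
      constructor <;> [linarith [Real.pi_pos]; linarith]
    have hat : a*t = ((n+1:ℕ):ℝ)*π - a*s := by
      rw [hs_def, ha_def]; push_cast; ring
    have hsin_u : sin (a*t) = -((-1:ℝ)^(n+1) * sin (a*s)) := by
      rw [hat, Real.sin_nat_mul_pi_sub]
    have hcos_u : cos (a*t) = (-1:ℝ)^(n+1) * cos (a*s) := by
      rw [hat, Real.cos_nat_mul_pi_sub]
    rcases Nat.even_or_odd (n+1) with hpar | hpar
    · -- even case : sin(at) = -sin(as), cos(at) = cos(as)
      have hsign : ((-1:ℝ))^(n+1) = 1 := hpar.neg_one_pow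
      rw [hsign, one_mul] at hsin_u hcos_u
      have hsas : 0 < sin (a*s) := by rw [hsin_u] at hs; linarith
      have eL : 6*a*cos t*sin (a*t) = 6*a*cos s*sin (a*s) := by
        rw [hcos_t, hsin_u]; ring
      have eR : sin t * (4*(a^2-1) + 2*(a^2+2)*cos (a*t))
          = sin s * (4*(a^2-1) + 2*(a^2+2)*cos (a*s)) := by
        rw [hsin_t, hcos_u]
      rw [eL, eR]
      rcases le_or_gt (a*s) π with hu | hu
      · exact E_pos ha hs0 hs2 (by positivity) hu (le_of_eq (by ring))
      · have h2pi : 2*π ≤ a*s := by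
          by_contra hcon
          push_neg at hcon
          have h1 : sin (a*s) = -sin (a*s - π) := by rw [Real.sin_sub_pi]; ring
          have h2 : 0 ≤ sin (a*s - π) :=
            sin_nonneg_of_nonneg_of_le_pi (by linarith) (by linarith)
          linarith
        have hc2 := E_crude ha hs0 hs2 h2pi (Real.sin_le_one (a*s))
        have hss : 0 ≤ sin s := by rw [← hsin_t]; exact hst
        have hBlb2 : sin s * (2*(a^2-4)) ≤ sin s * (4*(a^2-1) + 2*(a^2+2)*cos (a*s)) :=
          mul_le_mul_of_nonneg_left (Blb ha (Real.neg_one_le_cos (a*s)) (Real.cos_le_one (a*s))) hss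
        linarith
    · -- odd case : sin(at) = sin(as), cos(at) = -cos(as)
      have hsign : ((-1:ℝ))^(n+1) = -1 := hpar.neg_one_pow
      rw [hsign] at hsin_u hcos_u
      have hsin_u' : sin (a*t) = sin (a*s) := by rw [hsin_u]; ring
      have hcos_u' : cos (a*t) = -cos (a*s) := by rw [hcos_u]; ring
      have hsas : sin (a*s) < 0 := by rw [hsin_u'] at hs; linarith
      have hss : 0 ≤ sin s := by rw [← hsin_t]; exact hst
      have hup : π < a*s := by
        by_contra hcon
        push_neg at hcon
        have := sin_nonneg_of_nonneg_of_le_pi (by positivity : (0:ℝ) ≤ a*s) hcon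
        linarith
      rcases le_or_gt (a*s) (2*π) with hu2 | hu2
      · obtain ⟨v, hv_def⟩ : ∃ v : ℝ, v = a*s - π := ⟨_, rfl⟩
        have hv0 : 0 < v := by rw [hv_def]; linarith
        have hvpi : v ≤ π := by rw [hv_def]; linarith
        have hsv : sin v = -sin (a*s) := by rw [hv_def, Real.sin_sub_pi]
        have hcv : cos v = -cos (a*s) := by rw [hv_def, Real.cos_sub_pi]
        have hyp : 3*a^2*v + v^3 ≤ a^3*(3*s + s^3) :=
          hyp_lemma ha hv0 hvpi (by rw [hv_def]; ring) hs0.le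
        have key := E_pos ha hs0 hs2 hv0 hvpi hyp
        have eL : 6*a*cos t*sin (a*t) = 6*a*cos s*sin v := by
          rw [hcos_t, hsin_u', hsv]; ring
        have eR : sin t * (4*(a^2-1) + 2*(a^2+2)*cos (a*t))
            = sin s * (4*(a^2-1) + 2*(a^2+2)*cos v) := by
          rw [hsin_t, hcos_u', hcv]
        rw [eL, eR]
        exact key
      · have h2pi : 2*π ≤ a*s := hu2.le
        have hc2 := E_crude ha hs0 hs2 h2pi
          (show -sin (a*s) ≤ 1 by linarith [Real.neg_one_le_sin (a*s)])
        have hBlb2 : sin s * (2*(a^2-4)) ≤ sin s * (4*(a^2-1) + 2*(a^2+2)*(-cos (a*s))) :=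
          mul_le_mul_of_nonneg_left (Blb ha (by linarith [Real.cos_le_one (a*s)])
            (by linarith [Real.neg_one_le_cos (a*s)])) hss
        have eL : 6*a*cos t*sin (a*t) = 6*a*cos s*(-sin (a*s)) := by
          rw [hcos_t, hsin_u']; ring
        have eR : sin t * (4*(a^2-1) + 2*(a^2+2)*cos (a*t))
            = sin s * (4*(a^2-1) + 2*(a^2+2)*(-cos (a*s))) := by
          rw [hsin_t, hcos_u']
        rw [eL, eR]
        linarith


lemma step (n : ℕ) (hn : 2 ≤ n) {t : ℝ} (ht0 : 0 < t) (htp : t < π) :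
    ((n:ℝ)^3 - n) * (((n:ℝ)+2) * sin t - sin (((n:ℝ)+2)*t)) ≤
      (((n:ℝ)+2)^3 - ((n:ℝ)+2)) * ((n:ℝ) * sin t - sin ((n:ℝ)*t)) := by
  have hE := E_nonneg n hn ht0 htp
  have hN : (2:ℝ) ≤ (n:ℝ) := by exact_mod_cast hn
  have e1 : (n:ℝ)*t = ((n:ℝ)+1)*t - t := by ring
  have e2 : ((n:ℝ)+2)*t = ((n:ℝ)+1)*t + t := by ring
  rw [e1, e2, Real.sin_sub, Real.sin_add]
  nlinarith [mul_le_mul_of_nonneg_left hE (by linarith : (0:ℝ) ≤ (n:ℝ)+1)]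

lemma combine {cn cM c2 Fn FM F2 : ℝ} (hcM : 0 < cM) (hcn : 0 ≤ cn) (hc2 : 0 ≤ c2)
    (ih : cn * FM ≤ cM * Fn) (hstep : cM * F2 ≤ c2 * FM) : cn * F2 ≤ c2 * Fn := by
  have m1 := mul_le_mul_of_nonneg_left ih hc2
  have m2 := mul_le_mul_of_nonneg_left hstep hcn
  have big : cM * (cn * F2) ≤ cM * (c2 * Fn) := by nlinarith [m1, m2]
  exact le_of_mul_le_mul_left big hcM

lemma chain (k n : ℕ) (hn : 2 ≤ n) {t : ℝ} (ht0 : 0 < t) (htp : t < π) :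
    ((n:ℝ)^3 - n) * (((n:ℝ)+2*k) * sin t - sin (((n:ℝ)+2*k)*t)) ≤
      (((n:ℝ)+2*k)^3 - ((n:ℝ)+2*k)) * ((n:ℝ) * sin t - sin ((n:ℝ)*t)) := by
  induction k with
  | zero => simp
  | succ k ih =>
    have hN : (2:ℝ) ≤ (n:ℝ) := by exact_mod_cast hn
    have hM : 2 ≤ n + 2*k := by omega
    have hk0 : (0:ℝ) ≤ (k:ℝ) := Nat.cast_nonneg k
    have hstep := step (n + 2*k) hM ht0 htp
    push_cast at hstep ih ⊢
    have eM : ((n:ℝ) + 2*(k:ℝ)) + 2 = (n:ℝ) + 2*((k:ℝ)+1) := by ring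
    rw [eM] at hstep
    have h2M : (2:ℝ) ≤ (n:ℝ)+2*(k:ℝ) := by linarith
    have hMpos : (0:ℝ) < ((n:ℝ)+2*(k:ℝ))^3 - ((n:ℝ)+2*(k:ℝ)) := by
      nlinarith [mul_pos (mul_pos (show (0:ℝ) < (n:ℝ)+2*(k:ℝ) by linarith)
        (show (0:ℝ) < (n:ℝ)+2*(k:ℝ) - 1 by linarith)) (show (0:ℝ) < (n:ℝ)+2*(k:ℝ) + 1 by linarith)]
    have hcoef1 : (0:ℝ) ≤ (n:ℝ)^3 - n := by
      nlinarith [mul_pos (mul_pos (show (0:ℝ) < (n:ℝ) by linarith)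
        (show (0:ℝ) < (n:ℝ) - 1 by linarith)) (show (0:ℝ) < (n:ℝ) + 1 by linarith)]
    have hcoef2 : (0:ℝ) ≤ ((n:ℝ)+2*((k:ℝ)+1))^3 - ((n:ℝ)+2*((k:ℝ)+1)) := by
      nlinarith [mul_pos (mul_pos (show (0:ℝ) < (n:ℝ)+2*((k:ℝ)+1) by linarith)
        (show (0:ℝ) < (n:ℝ)+2*((k:ℝ)+1) - 1 by linarith)) (show (0:ℝ) < (n:ℝ)+2*((k:ℝ)+1) + 1 by linarith)]
    exact combine hMpos hcoef1 hcoef2 ih hstep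

theorem stmt_3 (m n : ℕ) (hn : 2 ≤ n) (hnm : n < m) (hpar : Even (m - n)) :
    ∀ t ∈ Set.Ioo (0 : ℝ) π,
      ((m : ℝ) ^ 3 - m) * ((n : ℝ) * Real.sin t - Real.sin ((n : ℝ) * t)) ≥
        ((n : ℝ) ^ 3 - n) * ((m : ℝ) * Real.sin t - Real.sin ((m : ℝ) * t)) := by
  intro t ht
  obtain ⟨r, hr⟩ := hpar
  have hm : m = n + 2*r := by omega
  subst hm
  have := chain r n hn ht.1 ht.2
  push_cast at this ⊢
  convert this using 3 <;> push_cast <;> ring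
end

section
/- Let n ≥ 2 be an integer. Then for every t ∈ (0, π), 4(2n − 1)·(n·sin t − sin(n t)) ≥ (n + 1)·((2n − 1)·sin t − sin((2n − 1) t)). -/
set_option maxHeartbeats 1000000

open Real

private lemma nonneg_of_deriv (f f' : ℝ → ℝ) (hf : ∀ x, HasDerivAt f (f' x) x)
    (h0 : f 0 = 0) (hf' : ∀ x, 0 ≤ x → 0 ≤ f' x) {x : ℝ} (hx : 0 ≤ x) : 0 ≤ f x := by
  have hmono : MonotoneOn f (Set.Ici 0) := by
    apply monotoneOn_of_deriv_nonneg (convex_Ici 0)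
    · exact fun y _ => (hf y).continuousAt.continuousWithinAt
    · exact fun y _ => ((hf y).differentiableAt).differentiableWithinAt
    · intro y hy
      rw [(hf y).deriv]
      rw [interior_Ici] at hy
      exact hf' y hy.le
  have h := hmono (Set.mem_Ici.2 le_rfl) (Set.mem_Ici.2 hx) hx
  rwa [h0] at h

private lemma sin_ge_poly3 {x : ℝ} (hx : 0 ≤ x) : x - x^3/6 ≤ Real.sin x := by
  have h := nonneg_of_deriv (fun y => Real.sin y - (y - y^3/6))
      (fun y => Real.cos y - (1 - y^2/2)) (fun y => by
        have h1 : HasDerivAt (fun y : ℝ => y - y^3/6) (1 - 3*y^2/6) y := by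
          exact ((hasDerivAt_id y).sub ((hasDerivAt_pow 3 y).div_const 6)).congr_deriv (by norm_num <;> ring)
        have h2 := (Real.hasDerivAt_sin y).sub h1
        exact h2.congr_deriv (by ring))
      (by norm_num)
      (fun y _ => by have := Real.one_sub_sq_div_two_le_cos (x := y); simpa using this) hx
  simpa using h

private lemma cos_le_poly4 {x : ℝ} (hx : 0 ≤ x) : Real.cos x ≤ 1 - x^2/2 + x^4/24 := by
  have h := nonneg_of_deriv (fun y => (1 - y^2/2 + y^4/24) - Real.cos y)
      (fun y => Real.sin y - (y - y^3/6)) (fun y => by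
        have h1 : HasDerivAt (fun y : ℝ => 1 - y^2/2 + y^4/24) (-y + 4*y^3/24) y := by
          exact (((hasDerivAt_const y (1:ℝ)).sub ((hasDerivAt_pow 2 y).div_const 2)).add
            ((hasDerivAt_pow 4 y).div_const 24)).congr_deriv (by norm_num <;> ring)
        have h2 := h1.sub (Real.hasDerivAt_cos y)
        exact h2.congr_deriv (by ring))
      (by norm_num)
      (fun y hy => by have := sin_ge_poly3 hy; simpa using this) hx
  linarith [h]

private lemma sin_le_poly5 {x : ℝ} (hx : 0 ≤ x) : Real.sin x ≤ x - x^3/6 + x^5/120 := by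
  have h := nonneg_of_deriv (fun y => (y - y^3/6 + y^5/120) - Real.sin y)
      (fun y => (1 - y^2/2 + y^4/24) - Real.cos y) (fun y => by
        have h1 : HasDerivAt (fun y : ℝ => y - y^3/6 + y^5/120) (1 - 3*y^2/6 + 5*y^4/120) y := by
          exact (((hasDerivAt_id y).sub ((hasDerivAt_pow 3 y).div_const 6)).add
            ((hasDerivAt_pow 5 y).div_const 120)).congr_deriv (by norm_num <;> ring)
        have h2 := h1.sub (Real.hasDerivAt_sin y)
        exact h2.congr_deriv (by ring))
      (by norm_num)
      (fun y hy => by have := cos_le_poly4 hy; simpa using sub_nonneg.2 this) hx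
  linarith [h]

private lemma cos_ge_poly6 {x : ℝ} (hx : 0 ≤ x) : 1 - x^2/2 + x^4/24 - x^6/720 ≤ Real.cos x := by
  have h := nonneg_of_deriv (fun y => Real.cos y - (1 - y^2/2 + y^4/24 - y^6/720))
      (fun y => (y - y^3/6 + y^5/120) - Real.sin y) (fun y => by
        have h1 : HasDerivAt (fun y : ℝ => 1 - y^2/2 + y^4/24 - y^6/720)
            (-y + 4*y^3/24 - 6*y^5/720) y := by
          exact ((((hasDerivAt_const y (1:ℝ)).sub ((hasDerivAt_pow 2 y).div_const 2)).add
            ((hasDerivAt_pow 4 y).div_const 24)).sub ((hasDerivAt_pow 6 y).div_const 720)).congr_deriv (by norm_num <;> ring)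
        have h2 := (Real.hasDerivAt_cos y).sub h1
        exact h2.congr_deriv (by ring))
      (by norm_num)
      (fun y hy => by have := sin_le_poly5 hy; simpa using sub_nonneg.2 this) hx
  linarith [h]

private lemma sin_ge_poly7 {x : ℝ} (hx : 0 ≤ x) :
    x - x^3/6 + x^5/120 - x^7/5040 ≤ Real.sin x := by
  have h := nonneg_of_deriv (fun y => Real.sin y - (y - y^3/6 + y^5/120 - y^7/5040))
      (fun y => Real.cos y - (1 - y^2/2 + y^4/24 - y^6/720)) (fun y => by
        have h1 : HasDerivAt (fun y : ℝ => y - y^3/6 + y^5/120 - y^7/5040)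
            (1 - 3*y^2/6 + 5*y^4/120 - 7*y^6/5040) y := by
          exact ((((hasDerivAt_id y).sub ((hasDerivAt_pow 3 y).div_const 6)).add
            ((hasDerivAt_pow 5 y).div_const 120)).sub ((hasDerivAt_pow 7 y).div_const 5040)).congr_deriv (by norm_num <;> ring)
        have h2 := (Real.hasDerivAt_sin y).sub h1
        exact h2.congr_deriv (by ring))
      (by norm_num)
      (fun y hy => by have := cos_ge_poly6 hy; simpa using sub_nonneg.2 this) hx
  linarith [h]

private lemma abs_sin_nat_mul (m : ℕ) (x : ℝ) : |Real.sin (m * x)| ≤ m * |Real.sin x| := by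
  induction m with
  | zero => simp
  | succ k ih =>
    have hk : ((k:ℝ) + 1) * x = (k:ℝ) * x + x := by ring
    push_cast
    rw [hk, Real.sin_add]
    calc |Real.sin ((k:ℝ)*x) * Real.cos x + Real.cos ((k:ℝ)*x) * Real.sin x|
        ≤ |Real.sin ((k:ℝ)*x) * Real.cos x| + |Real.cos ((k:ℝ)*x) * Real.sin x| := abs_add_le _ _
      _ ≤ |Real.sin ((k:ℝ)*x)| * 1 + 1 * |Real.sin x| := by
          rw [abs_mul, abs_mul]
          gcongr
          · exact Real.abs_cos_le_one x
          · exact Real.abs_cos_le_one _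
      _ ≤ (k:ℝ) * |Real.sin x| + 1 * |Real.sin x| := by
          have h := ih
          nlinarith [abs_nonneg (Real.sin x)]
      _ = ((k:ℝ) + 1) * |Real.sin x| := by ring

/-- In the small-`x` regime, quantitative bounds on `x`. -/
private lemma smallx (ν x : ℝ) (hν : 3 ≤ ν) (hx0 : 0 < x) (hx : x ≤ π/2)
    (hsmall : Real.sin x < 3/(2*ν-1)) : x ≤ 2/3 ∧ (2*ν-1)*x ≤ 81/25 := by
  have hP : (0:ℝ) < 2*ν-1 := by linarith
  have hp3 : x - x^3/6 ≤ Real.sin x := sin_ge_poly3 hx0.le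
  have h35 : (3:ℝ)/(2*ν-1) ≤ 3/5 := by
    rw [div_le_div_iff₀ hP (by norm_num : (0:ℝ) < 5)]
    linarith
  have hx23 : x ≤ 2/3 := by
    by_contra hcon
    push_neg at hcon
    have hpi : x ≤ 1.575 := by
      have := Real.pi_lt_d2
      linarith
    have hq : Real.sin x < 3/5 := lt_of_lt_of_le hsmall h35
    nlinarith [mul_nonneg (by linarith : (0:ℝ) ≤ x - 2/3) (by linarith : (0:ℝ) ≤ 1.575 - x),
      sq_nonneg (x - 2/3), sq_nonneg x, mul_nonneg (mul_nonneg hx0.le hx0.le) hx0.le]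
  refine ⟨hx23, ?_⟩
  have h2527 : (25/27)*x ≤ Real.sin x := by
    nlinarith [mul_nonneg hx0.le (by nlinarith : (0:ℝ) ≤ 2/27 - x^2/6)]
  have hlt : (25/27)*x < 3/(2*ν-1) := lt_of_le_of_lt h2527 hsmall
  rw [lt_div_iff₀ hP] at hlt
  nlinarith [hlt]

/-- Core inequality for `0 < x ≤ π/2`. -/
private lemma key (ν x : ℝ) (hν : 3 ≤ ν) (hx0 : 0 < x) (hx : x ≤ π/2) :
    0 ≤ (2*ν-1)*(3*ν-1)*Real.sin x - 4*(2*ν-1)*Real.sin (ν*x)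
      + (ν+1)*Real.sin ((2*ν-1)*x) := by
  have hP : (0:ℝ) < 2*ν-1 := by linarith
  by_cases hbig : 3/(2*ν-1) ≤ Real.sin x
  · have h3 : 3 ≤ (2*ν-1) * Real.sin x := by
      rw [div_le_iff₀ hP] at hbig
      nlinarith [hbig]
    have h1 := Real.sin_le_one (ν*x)
    have h2 := Real.neg_one_le_sin ((2*ν-1)*x)
    nlinarith [h3, h1, h2, hν, mul_le_mul_of_nonneg_left h1 (by linarith : (0:ℝ) ≤ 4*(2*ν-1)),
      mul_le_mul_of_nonneg_left h2 (by linarith : (0:ℝ) ≤ ν+1),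
      mul_le_mul_of_nonneg_left h3 (by linarith : (0:ℝ) ≤ 3*ν-1)]
  · push_neg at hbig
    obtain ⟨hx23, hXb⟩ := smallx ν x hν hx0 hx hbig
    have hp3 : x - x^3/6 ≤ Real.sin x := sin_ge_poly3 hx0.le
    have hνx : (0:ℝ) ≤ ν*x := mul_nonneg (by linarith) hx0.le
    have hPx : (0:ℝ) ≤ (2*ν-1)*x := mul_nonneg hP.le hx0.le
    have hb2 : Real.sin (ν*x) ≤ ν*x - (ν*x)^3/6 + (ν*x)^5/120 := sin_le_poly5 hνx
    have hb3 : (2*ν-1)*x - ((2*ν-1)*x)^3/6 + ((2*ν-1)*x)^5/120 - ((2*ν-1)*x)^7/5040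
        ≤ Real.sin ((2*ν-1)*x) := sin_ge_poly7 hPx
    have e1 : (2*ν-1)*(3*ν-1)*(x - x^3/6) ≤ (2*ν-1)*(3*ν-1)*Real.sin x :=
      mul_le_mul_of_nonneg_left hp3 (by nlinarith)
    have e2 : 4*(2*ν-1)*Real.sin (ν*x) ≤ 4*(2*ν-1)*(ν*x - (ν*x)^3/6 + (ν*x)^5/120) :=
      mul_le_mul_of_nonneg_left hb2 (by linarith)
    have e3 : (ν+1)*((2*ν-1)*x - ((2*ν-1)*x)^3/6 + ((2*ν-1)*x)^5/120 - ((2*ν-1)*x)^7/5040)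
        ≤ (ν+1)*Real.sin ((2*ν-1)*x) :=
      mul_le_mul_of_nonneg_left hb3 (by linarith)
    have hQ : (2*ν-1)*(3*ν-1)*(x - x^3/6) - 4*(2*ν-1)*(ν*x - (ν*x)^3/6 + (ν*x)^5/120)
        + (ν+1)*((2*ν-1)*x - ((2*ν-1)*x)^3/6 + ((2*ν-1)*x)^5/120 - ((2*ν-1)*x)^7/5040)
        = x^5/5040 * (42*((ν+1)*(2*ν-1)^5 - 4*(2*ν-1)*ν^5) - (ν+1)*(2*ν-1)^7*x^2) := by
      ring
    -- bracket is nonnegative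
    have h5ν : (0:ℝ) ≤ 5*ν := by linarith
    have h56 : 5*ν ≤ 3*(2*ν-1) := by linarith
    have h625 : 625*ν^4 ≤ 81*(2*ν-1)^4 := by
      have := pow_le_pow_left₀ h5ν h56 4
      nlinarith [this]
    have hX2 : ((2*ν-1)*x)^2 ≤ (81/25)^2 := pow_le_pow_left₀ hPx hXb 2
    have hbr : 0 ≤ 42*((ν+1)*(2*ν-1)^5 - 4*(2*ν-1)*ν^5) - (ν+1)*(2*ν-1)^7*x^2 := by
      have k2 : ((ν+1)*(2*ν-1)^5) * ((2*ν-1)*x)^2 ≤ ((ν+1)*(2*ν-1)^5) * (6561/625) := by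
        apply mul_le_mul_of_nonneg_left _ (by positivity)
        nlinarith [hX2]
      have k3 : 625*ν^4*((2*ν-1)*ν) ≤ 81*(2*ν-1)^4*((2*ν-1)*ν) :=
        mul_le_mul_of_nonneg_right h625 (mul_nonneg hP.le (by linarith))
      have k4 : (0:ℝ) ≤ (6081*ν + 19689)*(2*ν-1)^5 := by positivity
      linarith [k2, k3, k4]
    have hQpos : 0 ≤ x^5/5040 * (42*((ν+1)*(2*ν-1)^5 - 4*(2*ν-1)*ν^5) - (ν+1)*(2*ν-1)^7*x^2) :=
      mul_nonneg (by positivity) hbr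
    rw [← hQ] at hQpos
    linarith [e1, e2, e3, hQpos]

theorem stmt_4 (n : ℕ) (hn : 2 ≤ n) :
    ∀ t ∈ Set.Ioo (0 : ℝ) π,
      4 * (2 * (n : ℝ) - 1) * ((n : ℝ) * Real.sin t - Real.sin ((n : ℝ) * t)) ≥
        ((n : ℝ) + 1) *
          ((2 * (n : ℝ) - 1) * Real.sin t - Real.sin ((2 * (n : ℝ) - 1) * t)) := by
  intro t ht
  obtain ⟨ht0, htπ⟩ := ht
  have hs0 : 0 < Real.sin t := Real.sin_pos_of_pos_of_lt_pi ht0 htπ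
  rcases eq_or_lt_of_le hn with h2 | h3
  · -- n = 2
    subst h2
    have e2 : Real.sin (2*t) = 2*Real.sin t*Real.cos t := Real.sin_two_mul t
    have e3 : Real.sin (3*t) = 3*Real.sin t - 4*Real.sin t^3 := Real.sin_three_mul t
    have hc := Real.sin_sq_add_cos_sq t
    push_cast
    norm_num
    rw [e2, e3]
    nlinarith [mul_nonneg hs0.le (sq_nonneg (1 - Real.cos t)), hc, hs0]
  · have hν : (3:ℝ) ≤ (n:ℝ) := by exact_mod_cast h3
    suffices hF : 0 ≤ (2*(n:ℝ)-1)*(3*(n:ℝ)-1)*Real.sin t - 4*(2*(n:ℝ)-1)*Real.sin ((n:ℝ)*t)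
        + ((n:ℝ)+1)*Real.sin ((2*(n:ℝ)-1)*t) by
      have hiden : 4*(2*(n:ℝ)-1)*((n:ℝ)*Real.sin t - Real.sin ((n:ℝ)*t))
          - ((n:ℝ)+1)*((2*(n:ℝ)-1)*Real.sin t - Real.sin ((2*(n:ℝ)-1)*t))
          = (2*(n:ℝ)-1)*(3*(n:ℝ)-1)*Real.sin t - 4*(2*(n:ℝ)-1)*Real.sin ((n:ℝ)*t)
            + ((n:ℝ)+1)*Real.sin ((2*(n:ℝ)-1)*t) := by ring
      rw [ge_iff_le, ← sub_nonneg, hiden]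
      exact hF
    by_cases hhalf : t ≤ π/2
    · exact key (n:ℝ) t hν ht0 hhalf
    · push_neg at hhalf
      have hε0 : 0 < π - t := by linarith
      have hεhalf : π - t ≤ π/2 := by linarith
      have hsε : Real.sin t = Real.sin (π - t) := (Real.sin_pi_sub t).symm
      have hnt : (n:ℝ)*t = (n:ℕ)*π - (n:ℝ)*(π - t) := by ring
      have h2nt : (2*(n:ℝ)-1)*t = ((2*n-1 : ℕ):ℝ)*π - ((2*n-1:ℕ):ℝ)*(π - t) := by
        push_cast [Nat.cast_sub (by omega : 1 ≤ 2*n)]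
        ring
      have hsin_nt : Real.sin ((n:ℝ)*t) = -((-1)^n * Real.sin ((n:ℝ)*(π - t))) := by
        rw [hnt]
        exact Real.sin_nat_mul_pi_sub ((n:ℝ)*(π - t)) n
      have hodd2 : Real.sin ((2*(n:ℝ)-1)*t) = Real.sin ((2*(n:ℝ)-1)*(π - t)) := by
        rw [h2nt, Real.sin_nat_mul_pi_sub]
        have hneg : ((-1:ℝ))^(2*n-1) = -1 := Odd.neg_one_pow ⟨n-1, by omega⟩
        rw [hneg]
        push_cast [Nat.cast_sub (by omega : 1 ≤ 2*n)]
        ring_nf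
      rcases Nat.even_or_odd n with hpar | hpar
      · -- n even : sin(n t) = - sin(n (π - t))
        have hsin_nt' : Real.sin ((n:ℝ)*t) = -Real.sin ((n:ℝ)*(π - t)) := by
          rw [hsin_nt, hpar.neg_one_pow]
          ring
        rw [hsε, hsin_nt', hodd2]
        set ε := π - t with hεdef
        have hP : (0:ℝ) < 2*(n:ℝ)-1 := by linarith
        have hsε0 : 0 < Real.sin ε := Real.sin_pos_of_pos_of_lt_pi hε0 (by linarith [Real.pi_pos])
        by_cases hbig : 3/(2*(n:ℝ)-1) ≤ Real.sin ε
        · have h3 : 3 ≤ (2*(n:ℝ)-1) * Real.sin ε := by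
            rw [div_le_iff₀ hP] at hbig
            nlinarith [hbig]
          have h1 := Real.neg_one_le_sin ((n:ℝ)*ε)
          have h2 := Real.neg_one_le_sin ((2*(n:ℝ)-1)*ε)
          nlinarith [mul_le_mul_of_nonneg_left h1 (by linarith : (0:ℝ) ≤ 4*(2*(n:ℝ)-1)),
            mul_le_mul_of_nonneg_left h2 (by linarith : (0:ℝ) ≤ (n:ℝ)+1),
            mul_le_mul_of_nonneg_left h3 (by linarith : (0:ℝ) ≤ 3*(n:ℝ)-1)]
        · push_neg at hbig
          obtain ⟨hx23, hXb⟩ := smallx (n:ℝ) ε hν hε0 hεhalf hbig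
          have hνε_le : (n:ℝ)*ε ≤ π := by
            have h56 : 5*(n:ℝ) ≤ 3*(2*(n:ℝ)-1) := by linarith
            have := mul_le_mul_of_nonneg_right h56 hε0.le
            nlinarith [hXb, Real.pi_gt_three]
          have hsinνε : 0 ≤ Real.sin ((n:ℝ)*ε) :=
            Real.sin_nonneg_of_nonneg_of_le_pi (mul_nonneg (by linarith) hε0.le) hνε_le
          have hcast : ((2*n-1 : ℕ):ℝ) = 2*(n:ℝ)-1 := by
            push_cast [Nat.cast_sub (by omega : 1 ≤ 2*n)]
            ring
          have habs := abs_sin_nat_mul (2*n-1) ε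
          rw [hcast] at habs
          have hge : -((2*(n:ℝ)-1)*Real.sin ε) ≤ Real.sin ((2*(n:ℝ)-1)*ε) := by
            rw [abs_of_pos hsε0] at habs
            linarith [habs, neg_abs_le (Real.sin ((2*(n:ℝ)-1)*ε))]
          linarith [mul_nonneg (by linarith : (0:ℝ) ≤ 4*(2*(n:ℝ)-1)) hsinνε,
            mul_le_mul_of_nonneg_left hge (by linarith : (0:ℝ) ≤ (n:ℝ)+1),
            mul_pos (mul_pos hP (by linarith : (0:ℝ) < 2*(n:ℝ)-2)) hsε0]
      · -- n odd : sin(n t) = sin(n (π - t))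
        have hsin_nt' : Real.sin ((n:ℝ)*t) = Real.sin ((n:ℝ)*(π - t)) := by
          rw [hsin_nt, hpar.neg_one_pow]
          ring
        rw [hsε, hsin_nt', hodd2]
        exact key (n:ℝ) (π - t) hν hε0 hεhalf
end
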